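/- Fix an integer N ≥ 1, pairwise distinct complex numbers u_1, …, u_N, an index m ∈ {1,…,N}, and a complex number y ∉ {u_1,…,u_N}. Then ∑_{k ≠ m} (u_k − y)^N / ((u_k − u_m) · ∏_{β ≠ k} (u_k − u_β)) = 1 − N·(u_m − y)^{N−1} / ∏_{k ≠ m}(u_m − u_k) + (u_m − y)^N / ∏_{k ≠ m}(u_m − u_k) · ∑_{β ≠ m} 1/(u_m − u_β). -/

import Mathlib

open Finset Polynomial

theorem stmt6 (N : ℕ) (hN : 1 ≤ N) (u : Fin N → ℂ) (hu : Function.Injective u)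
    (m : Fin N) (y : ℂ) (hy : ∀ k, y ≠ u k) :
    ∑ k ∈ univ.erase m,
        (u k - y) ^ N / ((u k - u m) * ∏ β ∈ univ.erase k, (u k - u β)) =
      1 - (N : ℂ) * (u m - y) ^ (N - 1) / (∏ k ∈ univ.erase m, (u m - u k)) +
        (u m - y) ^ N / (∏ k ∈ univ.erase m, (u m - u k)) *
          ∑ β ∈ univ.erase m, 1 / (u m - u β) := by
  classical
  have hne : ∀ {a b : Fin N}, a ≠ b → u a - u b ≠ 0 :=
    fun h => sub_ne_zero.mpr (fun e => h (hu e))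
  set d : Fin N → ℂ := fun k => ∏ β ∈ univ.erase k, (u k - u β) with hd
  have hdne : ∀ k, d k ≠ 0 := by
    intro k
    rw [hd]
    dsimp only
    rw [prod_ne_zero_iff]
    intro β hβ
    exact hne (mem_erase.mp hβ).1.symm
  -- Step 1: interpolation identity
  have hcard : #(univ : Finset (Fin N)) = N := by simp
  have hinterp : ((X - C y) ^ N - Lagrange.nodal univ u : ℂ[X]) =
      ∑ k, C ((u k - y) ^ N / d k) * Lagrange.nodal (univ.erase k) u := by
    have h := Lagrange.eq_interpolate (s := univ) (v := u)
      (f := (X - C y) ^ N - Lagrange.nodal univ u) (hu.injOn) ?deg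
    case deg =>
      rw [hcard]
      apply lt_of_lt_of_le (Polynomial.degree_sub_lt ?_ (pow_ne_zero _ (X_sub_C_ne_zero y)) ?_) ?_
      · rw [Lagrange.degree_nodal, hcard, degree_pow, degree_X_sub_C]; simp
      · rw [((monic_X_sub_C y).pow N).leadingCoeff, Lagrange.nodal_monic.leadingCoeff]
      · rw [degree_pow, degree_X_sub_C]; simp
    rw [h, Lagrange.interpolate_apply]
    refine sum_congr rfl fun k _ => ?_
    have hbasis : Lagrange.basis univ u k =
        C (∏ β ∈ univ.erase k, (u k - u β))⁻¹ * ∏ β ∈ univ.erase k, (X - C (u β)) := by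
      rw [Lagrange.basis]
      simp_rw [Lagrange.basisDivisor]
      rw [prod_mul_distrib, ← prod_inv_distrib, ← map_prod]
    rw [hbasis, eval_sub, eval_pow, eval_sub, eval_X, eval_C,
      Lagrange.eval_nodal_at_node (mem_univ k), sub_zero, Lagrange.nodal_eq, hd,
      div_eq_mul_inv, C_mul, mul_assoc]
  -- Step 2: differentiate and evaluate at u m
  set W : Fin N → ℂ := fun k => (derivative (Lagrange.nodal (univ.erase k) u)).eval (u m) with hW
  have hE := congrArg (fun p : ℂ[X] => (derivative p).eval (u m)) hinterp
  rw [derivative_sub, eval_sub, derivative_X_sub_C_pow, eval_mul, eval_C, eval_pow, eval_sub,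
    eval_X, eval_C, derivative_sum, eval_finset_sum] at hE
  have hWdef : ∀ k, (derivative (Lagrange.nodal (univ.erase k) u)).eval (u m) = W k :=
    fun k => rfl
  simp only [derivative_C_mul, eval_mul, eval_C, hWdef] at hE
  have hPm : (derivative (Lagrange.nodal univ u)).eval (u m) = d m := by
    rw [Lagrange.derivative_nodal, eval_finset_sum,
      Finset.sum_eq_single_of_mem m (mem_univ m)]
    · rw [Lagrange.eval_nodal]
    · intro γ _ hγm
      rw [Lagrange.eval_nodal]
      exact prod_eq_zero (mem_erase.mpr ⟨hγm.symm, mem_univ m⟩) (by ring)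
  rw [hPm] at hE
  -- values of W
  have hWk : ∀ k ∈ univ.erase m, W k = d m / (u m - u k) := by
    intro k hk
    have hk' : k ≠ m := (mem_erase.mp hk).1
    rw [eq_div_iff (hne (Ne.symm hk')), mul_comm]
    rw [hW]
    dsimp only
    rw [Lagrange.derivative_nodal, eval_finset_sum,
      Finset.sum_eq_single_of_mem m (mem_erase.mpr ⟨Ne.symm hk', mem_univ m⟩)]
    · rw [Lagrange.eval_nodal, Finset.erase_right_comm,
        Finset.mul_prod_erase (univ.erase m) (fun β => u m - u β)
          (mem_erase.mpr ⟨hk', mem_univ k⟩)]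
    · intro γ hγ hγm
      rw [Lagrange.eval_nodal]
      apply prod_eq_zero (i := m) ?_ (by ring)
      exact mem_erase.mpr ⟨hγm.symm, mem_erase.mpr ⟨Ne.symm hk', mem_univ m⟩⟩
  have hWm : W m = d m * ∑ β ∈ univ.erase m, 1 / (u m - u β) := by
    rw [hW]
    dsimp only
    rw [Lagrange.derivative_nodal, eval_finset_sum, mul_sum]
    refine sum_congr rfl fun γ hγ => ?_
    have hγm : γ ≠ m := (mem_erase.mp hγ).1
    rw [Lagrange.eval_nodal, mul_one_div, eq_div_iff (hne (Ne.symm hγm)), mul_comm,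
      Finset.mul_prod_erase (univ.erase m) (fun β => u m - u β) hγ]
  -- Step 3: final algebra
  rw [← Finset.add_sum_erase _ _ (mem_univ m)] at hE
  have hsum : ∑ k ∈ univ.erase m, (u k - y) ^ N / ((u k - u m) * d k) =
      -(1 / d m) * ∑ k ∈ univ.erase m, (u k - y) ^ N / d k * W k := by
    rw [mul_sum]
    refine sum_congr rfl fun k hk => ?_
    have hk' : k ≠ m := (mem_erase.mp hk).1
    rw [hWk k hk]
    field_simp [hdne k, hdne m, hne hk', hne (Ne.symm hk')]
    ring
  have hrest : ∑ k ∈ univ.erase m, (u k - y) ^ N / d k * W k =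
      (N : ℂ) * (u m - y) ^ (N - 1) - d m - (u m - y) ^ N / d m * W m := by
    linear_combination -hE
  rw [hsum, hrest, hWm]
  rw [show (∏ k ∈ univ.erase m, (u m - u k)) = d m from rfl]
  field_simp [hdne m]
  ring
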